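/- For every Dyck path D, the number of pairs of consecutive valleys at the same height equals the number of symmetric peaks of D that are neither the first nor the last peak of D; in particular, the two statistics differ exactly when D starts or ends with a symmetric peak. -/

import Mathlib

/-- Height of the vertex after the first `j` steps of the path `w`
(`true` = up-step `u`, `false` = down-step `d`). -/
def hgt (w : List Bool) (j : ℕ) : ℤ :=
  ((w.take j).count true : ℤ) - ((w.take j).count false : ℤ)

/-- `w` is a Dyck word: equally many `u`'s and `d`'s, and every prefix
has at least as many `u`'s as `d`'s. -/
def IsDyckWord (w : List Bool) : Prop :=
  w.count true = w.count false ∧ ∀ j, 0 ≤ hgt w j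

instance : DecidablePred IsDyckWord := fun w => by
  have : IsDyckWord w ↔ (w.count true = w.count false ∧
      ∀ j ∈ List.range (w.length + 1), 0 ≤ hgt w j) := by
    constructor
    · rintro ⟨h1, h2⟩; exact ⟨h1, fun j _ => h2 j⟩
    · rintro ⟨h1, h2⟩
      refine ⟨h1, fun j => ?_⟩
      rcases le_or_gt j w.length with h | h
      · exact h2 j (List.mem_range.mpr (Nat.lt_succ_of_le h))
      · have : w.take j = w := List.take_of_length_le h.le
        have hw : hgt w j = hgt w w.length := by
          unfold hgt
          rw [this, List.take_of_length_le (le_refl _)]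
        rw [hw]
        exact h2 w.length (List.mem_range.mpr (Nat.lt_succ_of_le (le_refl _)))
  exact decidable_of_iff' _ this

/-- there is a peak (an occurrence of `ud`) at positions `i, i+1`. -/
def isPeakB (w : List Bool) (i : ℕ) : Bool :=
  w.getD i false && !(w.getD (i+1) true)

/-- there is a valley (an occurrence of `du`) at positions `i, i+1`. -/
def isValleyB (w : List Bool) (i : ℕ) : Bool :=
  !(w.getD i true) && w.getD (i+1) false

/-- length of the maximal run of `u`'s ending at position `i`. -/
def upRunL (w : List Bool) (i : ℕ) : ℕ :=
  ((List.range (i+1)).takeWhile (fun k => w.getD (i-k) false)).length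

/-- length of the maximal run of `d`'s starting at position `i`. -/
def downRunR (w : List Bool) (i : ℕ) : ℕ :=
  ((List.range (w.length - i)).takeWhile (fun k => !(w.getD (i+k) true))).length

/-- length of the maximal run of `d`'s ending at position `i`. -/
def downRunL (w : List Bool) (i : ℕ) : ℕ :=
  ((List.range (i+1)).takeWhile (fun k => !(w.getD (i-k) true))).length

/-- length of the maximal run of `u`'s starting at position `i`. -/
def upRunR (w : List Bool) (i : ℕ) : ℕ :=
  ((List.range (w.length - i)).takeWhile (fun k => w.getD (i+k) false)).length

/-- The peak at `i` is symmetric: its maximal mountain `u^a d^b` has `a = b`. -/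
def isSymPeakB (w : List Bool) (i : ℕ) : Bool :=
  isPeakB w i && (upRunL w i == downRunR w (i+1))

/-- The peak at `i` is asymmetric: its maximal mountain `u^a d^b` has `a ≠ b`. -/
def isAsymPeakB (w : List Bool) (i : ℕ) : Bool :=
  isPeakB w i && !(upRunL w i == downRunR w (i+1))

/-- weight of the peak at `i`: `min a b` for its maximal mountain `u^a d^b`. -/
def peakWeight (w : List Bool) (i : ℕ) : ℕ :=
  min (upRunL w i) (downRunR w (i+1))

/-- The valley at `i` is symmetric: the maximal `d^a u^b` containing it has `a = b`. -/
def isSymValleyB (w : List Bool) (i : ℕ) : Bool :=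
  isValleyB w i && (downRunL w i == upRunR w (i+1))

/-- weight of the valley at `i`: the largest `j` with `d^j u^j` through the valley. -/
def valleyWeight (w : List Bool) (i : ℕ) : ℕ :=
  min (downRunL w i) (upRunR w (i+1))

def peakCount (w : List Bool) : ℕ := ((List.range w.length).filter (isPeakB w)).length
def spCount (w : List Bool) : ℕ := ((List.range w.length).filter (isSymPeakB w)).length
def apCount (w : List Bool) : ℕ := ((List.range w.length).filter (isAsymPeakB w)).length
def svalCount (w : List Bool) : ℕ := ((List.range w.length).filter (isSymValleyB w)).length

/-- total weight of the symmetric peaks of `w`. -/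
def spWeight (w : List Bool) : ℕ :=
  (((List.range w.length).filter (isSymPeakB w)).map (peakWeight w)).sum

/-- total weight of the asymmetric peaks of `w`. -/
def apWeight (w : List Bool) : ℕ :=
  (((List.range w.length).filter (isAsymPeakB w)).map (peakWeight w)).sum

/-- total weight of the symmetric valleys of `w`. -/
def svWeight (w : List Bool) : ℕ :=
  (((List.range w.length).filter (isSymValleyB w)).map (valleyWeight w)).sum

/-- positions of the peaks of `w`, from left to right. -/
def peakList (w : List Bool) : List ℕ := (List.range w.length).filter (isPeakB w)

/-- positions of the valleys of `w`, from left to right. -/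
def valleyList (w : List Bool) : List ℕ := (List.range w.length).filter (isValleyB w)

/-- heights of the peaks of `w`, from left to right. -/
def peakHeights (w : List Bool) : List ℤ := (peakList w).map (fun i => hgt w (i+1))

/-- heights of the valleys of `w`, from left to right. -/
def valleyHeights (w : List Bool) : List ℤ := (valleyList w).map (fun i => hgt w (i+1))

/-- number of pairs of adjacent equal entries of a list. -/
def eqAdjCount (l : List ℤ) : ℕ :=
  ((l.zip l.tail).filter (fun p => decide (p.1 = p.2))).length

/-- `sp'`: number of pairs of consecutive valleys of `w` at the same height. -/
def spPrime (w : List Bool) : ℕ := eqAdjCount (valleyHeights w)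

/-- all Bool lists of length `m`, as a Finset. -/
def boolLists (m : ℕ) : Finset (List Bool) :=
  Finset.image (fun f : Fin m → Bool => List.ofFn f) Finset.univ

/-- The (finite) set of Dyck words of semilength `n`. -/
def dyckFinset (n : ℕ) : Finset (List Bool) :=
  (boolLists (2*n)).filter (fun w => IsDyckWord w)

namespace SP

/-! ### takeWhile-on-range specification -/

lemma tw_spec : ∀ (n : ℕ) (p : ℕ → Bool) (r : ℕ),
    ((List.range n).takeWhile p).length = r ↔
      (r ≤ n ∧ (∀ k < r, p k = true) ∧ (r < n → p r = false)) := by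
  intro n
  induction n with
  | zero =>
    intro p r
    simp only [List.range_zero, List.takeWhile_nil, List.length_nil]
    constructor
    · rintro rfl
      exact ⟨le_refl _, fun k hk => absurd hk (by omega), fun h => absurd h (by omega)⟩
    · rintro ⟨h1, _, _⟩; omega
  | succ n ih =>
    intro p r
    rw [List.range_succ_eq_map]
    by_cases h0 : p 0 = true
    · rw [List.takeWhile_cons_of_pos h0, List.takeWhile_map]
      simp only [List.length_cons, List.length_map, Function.comp_def, Nat.succ_eq_add_one]
      have H := ih (fun k => p (k + 1))
      cases r with
      | zero =>
        constructor
        · intro h; omega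
        · rintro ⟨_, _, h3⟩
          have := h3 (by omega)
          rw [h0] at this; cases this
      | succ r' =>
        constructor
        · intro h
          obtain ⟨a, b, c⟩ := (H r').mp (by omega)
          refine ⟨by omega, ?_, fun hlt => c (by omega)⟩
          intro k hk
          cases k with
          | zero => exact h0
          | succ k' => exact b k' (by omega)
        · rintro ⟨a, b, c⟩
          have : (List.takeWhile (fun k => p (k + 1)) (List.range n)).length = r' :=
            (H r').mpr ⟨by omega, fun k hk => b (k + 1) (by omega), fun hlt => c (by omega)⟩
          omega
    · rw [List.takeWhile_cons_of_neg h0]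
      simp only [List.length_nil]
      constructor
      · rintro rfl
        refine ⟨by omega, fun k hk => absurd hk (by omega), fun _ => by simpa using h0⟩
      · rintro ⟨h1, h2, h3⟩
        by_contra hr
        exact h0 (h2 0 (by omega))

/-! ### blocks and structured words -/

def symb (p : ℕ × ℕ) : Bool := p.1 == p.2

def blkL (p : ℕ × ℕ) : List Bool := List.replicate p.1 true ++ List.replicate p.2 false

def ofP : List (ℕ × ℕ) → List Bool
  | [] => []
  | p :: L => blkL p ++ ofP L

def PosL (L : List (ℕ × ℕ)) : Prop := ∀ p ∈ L, 0 < p.1 ∧ 0 < p.2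

lemma blkL_length (p : ℕ × ℕ) : (blkL p).length = p.1 + p.2 := by
  simp [blkL]

lemma getD_lt_a (p : ℕ × ℕ) (t : List Bool) {i : ℕ} (h : i < p.1) (d : Bool) :
    (blkL p ++ t).getD i d = true := by
  rw [List.getD_eq_getElem?_getD, List.getElem?_append_left (by rw [blkL_length]; omega)]
  unfold blkL
  rw [List.getElem?_append_left (by simpa using h)]
  simp [List.getElem?_replicate, h]

lemma getD_mid (p : ℕ × ℕ) (t : List Bool) {i : ℕ} (h1 : p.1 ≤ i) (h2 : i < p.1 + p.2)
    (d : Bool) : (blkL p ++ t).getD i d = false := by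
  rw [List.getD_eq_getElem?_getD, List.getElem?_append_left (by rw [blkL_length]; omega)]
  unfold blkL
  rw [List.getElem?_append_right (by simpa using h1)]
  simp only [List.length_replicate]
  rw [List.getElem?_replicate]
  simp only [if_pos (by omega : i - p.1 < p.2)]
  rfl

lemma getD_shift (p : ℕ × ℕ) (t : List Bool) (j : ℕ) (d : Bool) :
    (blkL p ++ t).getD (p.1 + p.2 + j) d = t.getD j d := by
  rw [List.getD_eq_getElem?_getD, List.getElem?_append_right (by rw [blkL_length]; omega),
    List.getD_eq_getElem?_getD, blkL_length]
  congr 2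
  omega

lemma getD0_true {t : List Bool} (h : t.getD 0 false = true) : t.getD 0 true = true := by
  cases t with
  | nil => simp at h
  | cons x r => simpa using h

end SP
namespace SP

variable (p : ℕ × ℕ) (t : List Bool)

lemma len_w : (blkL p ++ t).length = p.1 + p.2 + t.length := by
  rw [List.length_append, blkL_length]

lemma upRunL_first (ha : 0 < p.1) : upRunL (blkL p ++ t) (p.1 - 1) = p.1 := by
  unfold upRunL
  rw [tw_spec]
  refine ⟨by omega, fun k hk => getD_lt_a p t (by omega) _, fun h => absurd h (by omega)⟩

lemma downRunR_first (ha : 0 < p.1) (hb : 0 < p.2)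
    (ht : t ≠ [] → t.getD 0 false = true) :
    downRunR (blkL p ++ t) p.1 = p.2 := by
  unfold downRunR
  rw [tw_spec, len_w]
  refine ⟨by omega, fun k hk => ?_, fun h => ?_⟩
  · rw [getD_mid p t (by omega) (by omega)]
    rfl
  · have htne : t ≠ [] := by
      intro he; rw [he] at h; simp at h
    have h0 : (blkL p ++ t).getD (p.1 + p.2) true = true := by
      have hs := getD_shift p t 0 true
      rw [Nat.add_zero] at hs
      rw [hs]
      exact getD0_true (ht htne)
    rw [h0]
    rfl

lemma upRunL_shift (hb : 0 < p.2) (j : ℕ) :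
    upRunL (blkL p ++ t) (p.1 + p.2 + j) = upRunL t j := by
  obtain ⟨h1, h2, h3⟩ := (tw_spec (j + 1) (fun k => t.getD (j - k) false) (upRunL t j)).mp rfl
  refine (tw_spec (p.1 + p.2 + j + 1)
    (fun k => (blkL p ++ t).getD (p.1 + p.2 + j - k) false) (upRunL t j)).mpr
    ⟨by omega, fun k hk => ?_, fun h => ?_⟩
  · have hkj : k ≤ j := by omega
    rw [show p.1 + p.2 + j - k = p.1 + p.2 + (j - k) by omega, getD_shift]
    exact h2 k hk
  · rcases Nat.lt_or_ge (upRunL t j) (j + 1) with hc | hc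
    · rw [show p.1 + p.2 + j - upRunL t j = p.1 + p.2 + (j - upRunL t j) by omega, getD_shift]
      exact h3 hc
    · have he : upRunL t j = j + 1 := by omega
      rw [he, show p.1 + p.2 + j - (j + 1) = p.1 + (p.2 - 1) by omega]
      exact getD_mid p t (by omega) (by omega) _

lemma downRunR_shift (j : ℕ) :
    downRunR (blkL p ++ t) (p.1 + p.2 + j) = downRunR t j := by
  unfold downRunR
  rw [len_w, show p.1 + p.2 + t.length - (p.1 + p.2 + j) = t.length - j by omega]
  have hp : (fun k => !(blkL p ++ t).getD (p.1 + p.2 + j + k) true)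
      = (fun k => !t.getD (j + k) true) := by
    funext k
    rw [show p.1 + p.2 + j + k = p.1 + p.2 + (j + k) by omega, getD_shift]
  rw [hp]

lemma isPeakB_shift (j : ℕ) : isPeakB (blkL p ++ t) (p.1 + p.2 + j) = isPeakB t j := by
  unfold isPeakB
  rw [getD_shift, show p.1 + p.2 + j + 1 = p.1 + p.2 + (j + 1) by omega, getD_shift]

lemma isValleyB_shift (j : ℕ) : isValleyB (blkL p ++ t) (p.1 + p.2 + j) = isValleyB t j := by
  unfold isValleyB
  rw [getD_shift, show p.1 + p.2 + j + 1 = p.1 + p.2 + (j + 1) by omega, getD_shift]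

lemma isSymPeakB_shift (hb : 0 < p.2) (j : ℕ) :
    isSymPeakB (blkL p ++ t) (p.1 + p.2 + j) = isSymPeakB t j := by
  unfold isSymPeakB
  rw [isPeakB_shift, upRunL_shift p t hb,
    show p.1 + p.2 + j + 1 = p.1 + p.2 + (j + 1) by omega, downRunR_shift]

lemma isPeakB_first (ha : 0 < p.1) (hb : 0 < p.2) :
    isPeakB (blkL p ++ t) (p.1 - 1) = true := by
  unfold isPeakB
  rw [getD_lt_a p t (by omega), show p.1 - 1 + 1 = p.1 by omega,
    getD_mid p t (by omega) (by omega)]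
  rfl

lemma isPeakB_small (ha : 0 < p.1) {i : ℕ} (h2 : i < p.1 + p.2) (hne : i ≠ p.1 - 1) :
    isPeakB (blkL p ++ t) i = false := by
  unfold isPeakB
  rcases Nat.lt_or_ge i p.1 with hc | hc
  · rw [getD_lt_a p t (by omega : i + 1 < p.1)]
    simp
  · rw [getD_mid p t hc h2]
    rfl

lemma isSymPeakB_first (ha : 0 < p.1) (hb : 0 < p.2)
    (ht : t ≠ [] → t.getD 0 false = true) :
    isSymPeakB (blkL p ++ t) (p.1 - 1) = symb p := by
  unfold isSymPeakB
  rw [isPeakB_first p t ha hb, upRunL_first p t ha, show p.1 - 1 + 1 = p.1 by omega,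
    downRunR_first p t ha hb ht]
  simp [symb]

lemma isValleyB_small (ha : 0 < p.1) {i : ℕ} (h2 : i < p.1 + p.2 - 1) :
    isValleyB (blkL p ++ t) i = false := by
  unfold isValleyB
  rcases Nat.lt_or_ge i p.1 with hc | hc
  · rw [getD_lt_a p t hc]
    rfl
  · rw [getD_mid p t (by omega) (by omega : i + 1 < p.1 + p.2)]
    simp

lemma isValleyB_junction (hb : 0 < p.2) :
    isValleyB (blkL p ++ t) (p.1 + p.2 - 1) = t.getD 0 false := by
  unfold isValleyB
  rw [getD_mid p t (by omega) (by omega), show p.1 + p.2 - 1 + 1 = p.1 + p.2 + 0 by omega,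
    getD_shift]
  simp

lemma hgt_append (x y : List Bool) (m : ℕ) :
    hgt (x ++ y) (x.length + m) = hgt x x.length + hgt y m := by
  unfold hgt
  rw [List.take_append, List.take_length, List.count_append, List.count_append]
  rw [List.take_of_length_le (by omega : x.length ≤ x.length + m), Nat.add_sub_cancel_left]
  push_cast
  ring

lemma hgt_blk_self : hgt (blkL p) (blkL p).length = (p.1 : ℤ) - p.2 := by
  unfold hgt
  rw [List.take_length]
  unfold blkL
  rw [List.count_append, List.count_append, List.count_replicate, List.count_replicate,
    List.count_replicate, List.count_replicate]
  norm_num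

lemma hgt_shift (m : ℕ) :
    hgt (blkL p ++ t) (p.1 + p.2 + m) = ((p.1 : ℤ) - p.2) + hgt t m := by
  rw [show p.1 + p.2 + m = (blkL p).length + m by rw [blkL_length], hgt_append,
    hgt_blk_self]

end SP
namespace SP

lemma filter_range_single (n m : ℕ) (q : ℕ → Bool) (hm : m < n)
    (hq : ∀ i < n, q i = decide (i = m)) : (List.range n).filter q = [m] := by
  rw [List.filter_congr (fun x hx => hq x (List.mem_range.mp hx)), List.filter_eq]
  rw [List.count_eq_one_of_mem List.nodup_range (List.mem_range.mpr hm)]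
  rfl

lemma filter_range_nil (n : ℕ) (q : ℕ → Bool) (hq : ∀ i < n, q i = false) :
    (List.range n).filter q = [] := by
  rw [List.filter_congr (fun x hx => hq x (List.mem_range.mp hx))]
  simp

def pkList : List (ℕ × ℕ) → List ℕ
  | [] => []
  | p :: L => (p.1 - 1) :: (pkList L).map (fun j => p.1 + p.2 + j)

def vlList : List (ℕ × ℕ) → List ℕ
  | [] => []
  | p :: L => (if L.isEmpty then [] else [p.1 + p.2 - 1])
      ++ (vlList L).map (fun j => p.1 + p.2 + j)

def vhList : List (ℕ × ℕ) → List ℤ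
  | [] => []
  | [_] => []
  | p :: q :: L => ((p.1 : ℤ) - p.2) :: (vhList (q :: L)).map (fun z => ((p.1 : ℤ) - p.2) + z)

lemma PosL_cons {p : ℕ × ℕ} {L : List (ℕ × ℕ)} (h : PosL (p :: L)) :
    (0 < p.1 ∧ 0 < p.2) ∧ PosL L :=
  ⟨h p (List.mem_cons_self), fun q hq => h q (List.mem_cons_of_mem _ hq)⟩

lemma ofP_nil_iff {L : List (ℕ × ℕ)} (h : PosL L) : ofP L = [] ↔ L = [] := by
  cases L with
  | nil => simp [ofP]
  | cons p L =>
    obtain ⟨⟨h1, h2⟩, _⟩ := PosL_cons h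
    simp only [ofP]
    constructor
    · intro he
      have : (blkL p ++ ofP L).length = 0 := by rw [he]; rfl
      rw [len_w] at this
      omega
    · intro he; cases he

lemma ofP_getD0 {L : List (ℕ × ℕ)} (h : PosL L) (hne : L ≠ []) :
    (ofP L).getD 0 false = true := by
  cases L with
  | nil => exact absurd rfl hne
  | cons p L =>
    obtain ⟨⟨h1, h2⟩, _⟩ := PosL_cons h
    exact getD_lt_a p (ofP L) h1 _

lemma ofP_head_cond {L : List (ℕ × ℕ)} (h : PosL L) :
    ofP L ≠ [] → (ofP L).getD 0 false = true := by
  intro hne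
  exact ofP_getD0 h (fun he => hne (by rw [he]; rfl))

lemma L_pk : ∀ (L : List (ℕ × ℕ)), PosL L → peakList (ofP L) = pkList L := by
  intro L
  induction L with
  | nil => intro _; rfl
  | cons p L ih =>
    intro h
    obtain ⟨⟨h1, h2⟩, hL⟩ := PosL_cons h
    unfold peakList
    show (List.range (blkL p ++ ofP L).length).filter (isPeakB (blkL p ++ ofP L)) = _
    rw [len_w, List.range_add, List.filter_append, List.filter_map]
    have e1 : (List.range (p.1 + p.2)).filter (isPeakB (blkL p ++ ofP L)) = [p.1 - 1] := by
      apply filter_range_single _ _ _ (by omega)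
      intro i hi
      by_cases he : i = p.1 - 1
      · rw [he, isPeakB_first p _ h1 h2]
        simp
      · rw [isPeakB_small p _ h1 hi he]
        simp [Ne.symm]
        omega
    have e2 : (isPeakB (blkL p ++ ofP L) ∘ fun x => p.1 + p.2 + x) = isPeakB (ofP L) := by
      funext j
      exact isPeakB_shift p (ofP L) j
    rw [e1, e2]
    have : (List.range (ofP L).length).filter (isPeakB (ofP L)) = pkList L := ih hL
    rw [this]
    rfl

lemma L_vl : ∀ (L : List (ℕ × ℕ)), PosL L → valleyList (ofP L) = vlList L := by
  intro L
  induction L with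
  | nil => intro _; rfl
  | cons p L ih =>
    intro h
    obtain ⟨⟨h1, h2⟩, hL⟩ := PosL_cons h
    unfold valleyList
    show (List.range (blkL p ++ ofP L).length).filter (isValleyB (blkL p ++ ofP L)) = _
    rw [len_w, List.range_add, List.filter_append, List.filter_map]
    have e2 : (isValleyB (blkL p ++ ofP L) ∘ fun x => p.1 + p.2 + x) = isValleyB (ofP L) := by
      funext j
      exact isValleyB_shift p (ofP L) j
    rw [e2]
    have e3 : (List.range (ofP L).length).filter (isValleyB (ofP L)) = vlList L := ih hL
    rw [e3]
    by_cases hLnil : L = []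
    · subst hLnil
      have e1 : (List.range (p.1 + p.2)).filter (isValleyB (blkL p ++ ofP [])) = [] := by
        apply filter_range_nil
        intro i hi
        by_cases he : i = p.1 + p.2 - 1
        · rw [he, isValleyB_junction p _ h2]
          rfl
        · exact isValleyB_small p _ h1 (by omega)
      rw [e1]
      rfl
    · have e1 : (List.range (p.1 + p.2)).filter (isValleyB (blkL p ++ ofP L)) =
          [p.1 + p.2 - 1] := by
        apply filter_range_single _ _ _ (by omega)
        intro i hi
        by_cases he : i = p.1 + p.2 - 1
        · rw [he, isValleyB_junction p _ h2, ofP_getD0 hL hLnil]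
          simp
        · rw [isValleyB_small p _ h1 (by omega)]
          simp [Ne.symm]
          omega
      rw [e1]
      have hemp : L.isEmpty = false := by
        cases L
        · exact absurd rfl hLnil
        · rfl
      simp [vlList, hemp]

lemma L_vh : ∀ (L : List (ℕ × ℕ)), PosL L → valleyHeights (ofP L) = vhList L := by
  intro L
  induction L with
  | nil => intro _; rfl
  | cons p L ih =>
    intro h
    obtain ⟨⟨h1, h2⟩, hL⟩ := PosL_cons h
    unfold valleyHeights
    rw [L_vl _ h]
    cases L with
    | nil => rfl
    | cons q M =>
      show ((p.1 + p.2 - 1) :: (vlList (q :: M)).map (fun j => p.1 + p.2 + j)).map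
        (fun i => hgt (blkL p ++ ofP (q :: M)) (i + 1)) = _
      rw [List.map_cons, List.map_map]
      have hh : hgt (blkL p ++ ofP (q :: M)) ((p.1 + p.2 - 1) + 1) = (p.1 : ℤ) - p.2 := by
        rw [show p.1 + p.2 - 1 + 1 = p.1 + p.2 + 0 by omega, hgt_shift]
        simp [hgt]
      rw [hh]
      have hmap : ((fun i => hgt (blkL p ++ ofP (q :: M)) (i + 1)) ∘ fun j => p.1 + p.2 + j)
          = (fun z => ((p.1 : ℤ) - p.2) + z) ∘ (fun i => hgt (ofP (q :: M)) (i + 1)) := by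
        funext i
        show hgt (blkL p ++ ofP (q :: M)) (p.1 + p.2 + i + 1) = _
        rw [show p.1 + p.2 + i + 1 = p.1 + p.2 + (i + 1) by omega, hgt_shift]
        rfl
      rw [hmap, ← List.map_map]
      have : (vlList (q :: M)).map (fun i => hgt (ofP (q :: M)) (i + 1))
          = vhList (q :: M) := by
        rw [← L_vl _ hL]
        exact ih hL
      rw [this]
      rfl

lemma L_sym : ∀ (L : List (ℕ × ℕ)), PosL L →
    (peakList (ofP L)).map (fun i => isSymPeakB (ofP L) i) = L.map symb := by
  intro L
  induction L with
  | nil => intro _; rfl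
  | cons p L ih =>
    intro h
    obtain ⟨⟨h1, h2⟩, hL⟩ := PosL_cons h
    rw [L_pk _ h]
    show ((p.1 - 1) :: (pkList L).map (fun j => p.1 + p.2 + j)).map
      (fun i => isSymPeakB (blkL p ++ ofP L) i) = _
    rw [List.map_cons, List.map_map]
    have hh : isSymPeakB (blkL p ++ ofP L) (p.1 - 1) = symb p :=
      isSymPeakB_first p (ofP L) h1 h2 (ofP_head_cond hL)
    rw [hh]
    have hmap : ((fun i => isSymPeakB (blkL p ++ ofP L) i) ∘ fun j => p.1 + p.2 + j)
        = fun i => isSymPeakB (ofP L) i := by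
      funext j
      exact isSymPeakB_shift p (ofP L) h2 j
    rw [hmap]
    have : (pkList L).map (fun i => isSymPeakB (ofP L) i) = L.map symb := by
      rw [← L_pk _ hL]
      exact ih hL
    rw [this]
    rfl

end SP
namespace SP

def cntAb : List Bool → ℕ
  | [] => 0
  | x :: l => (if 0 < l.length ∧ x = true then 1 else 0) + cntAb l

lemma eqAdj_cons (x : ℤ) (l : List ℤ) :
    eqAdjCount (x :: l) = (if l.head? = some x then 1 else 0) + eqAdjCount l := by
  cases l with
  | nil => simp [eqAdjCount]
  | cons y r =>
    show (((x, y) :: (y :: r).zip r).filter _).length = _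
    rw [List.filter_cons]
    by_cases hxy : x = y
    · subst hxy
      simp [eqAdjCount]
      omega
    · have hd : (decide ((x, y).1 = (x, y).2)) = false := by simpa using hxy
      rw [hd, if_neg Bool.false_ne_true,
        if_neg (show ¬ ((y :: r).head? = some x) by
          simpa using fun h : y = x => hxy h.symm)]
      simp [eqAdjCount]

lemma eqAdj_map_add (c : ℤ) : ∀ (l : List ℤ),
    eqAdjCount (l.map (fun z => c + z)) = eqAdjCount l := by
  intro l
  induction l with
  | nil => rfl
  | cons x l ih =>
    rw [List.map_cons, eqAdj_cons, eqAdj_cons, ih, List.head?_map]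
    congr 1
    cases l with
    | nil => simp
    | cons y r => simp

lemma vhList_head? (q : ℕ × ℕ) : ∀ (M : List (ℕ × ℕ)),
    (vhList (q :: M)).head? = if M.isEmpty then none else some ((q.1 : ℤ) - q.2) := by
  intro M
  cases M with
  | nil => rfl
  | cons r M' => rfl

lemma eqAdj_vh : ∀ (L : List (ℕ × ℕ)),
    eqAdjCount (vhList L) = cntAb ((L.map symb).tail) := by
  intro L
  induction L with
  | nil => rfl
  | cons p M ih =>
    cases M with
    | nil => rfl
    | cons q M' =>
      show eqAdjCount (((p.1 : ℤ) - p.2) ::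
        (vhList (q :: M')).map (fun z => ((p.1 : ℤ) - p.2) + z)) = _
      rw [eqAdj_cons, eqAdj_map_add, ih, List.head?_map, vhList_head?]
      show _ = cntAb (symb q :: (M'.map symb))
      rw [cntAb]
      congr 1
      cases M' with
      | nil => simp
      | cons r M'' =>
        simp only [List.isEmpty_cons]
        have e0 : (if false = true then (none : Option ℤ) else some ((q.1 : ℤ) - q.2))
            = some ((q.1 : ℤ) - q.2) := if_neg Bool.false_ne_true
        simp only [e0, Option.map_some]
        by_cases hq : q.1 = q.2
        · have c1 : some ((p.1 : ℤ) - p.2 + ((q.1 : ℤ) - q.2)) = some ((p.1 : ℤ) - p.2) := by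
            rw [Option.some_inj]; omega
          rw [if_pos c1,
            if_pos (show 0 < ((r :: M'').map symb).length ∧ symb q = true from
              ⟨by simp, by simp [symb, hq]⟩)]
        · have c1 : ¬ (some ((p.1 : ℤ) - p.2 + ((q.1 : ℤ) - q.2))
              = some ((p.1 : ℤ) - p.2)) := by
            rw [Option.some_inj]; omega
          rw [if_neg c1, if_neg (fun hc => hq (by simpa [symb] using hc.2))]

lemma A_pure : ∀ (P : List ℕ) (f : ℕ → Bool),
    ((List.range P.length).filter
      (fun j => decide (j + 1 < P.length) && f (P.getD j 0))).length
      = cntAb (P.map f) := by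
  intro P
  induction P with
  | nil => intro f; rfl
  | cons x M ih =>
    intro f
    rw [List.length_cons, List.range_succ_eq_map, List.filter_cons]
    have h0 : (decide (0 + 1 < M.length + 1) && f ((x :: M).getD 0 0))
        = (if 0 < (M.map f).length ∧ f x = true then true else false) := by
      simp only [List.getD_cons_zero, List.length_map]
      by_cases hM : 0 < M.length
      · cases hfx : f x <;> simp [hM, hfx]
      · have : M.length = 0 := by omega
        simp [this]
    rw [List.filter_map]
    have h1 : ((fun j => decide (j + 1 < M.length + 1) && f ((x :: M).getD j 0)) ∘ Nat.succ)
        = (fun j => decide (j + 1 < M.length) && f (M.getD j 0)) := by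
      funext j
      show (decide (j + 1 + 1 < M.length + 1) && f ((x :: M).getD (j + 1) 0)) = _
      rw [List.getD_cons_succ]
      congr 1
      exact decide_eq_decide.mpr (by omega)
    rw [h1]
    show _ = cntAb (f x :: M.map f)
    rw [cntAb, ← ih f]
    by_cases hc : (if 0 < (M.map f).length ∧ f x = true then true else false) = true
    · rw [h0]
      simp only [if_pos hc]
      rw [if_pos (by simpa using hc)]
      first
      | omega
      | (simp only [List.length_cons, List.length_map]; omega)
    · rw [h0]
      simp only [if_neg hc]
      rw [if_neg (by simpa using hc)]
      first
      | omega
      | (simp only [List.length_cons, List.length_map]; omega)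

lemma T_pure (P : List ℕ) (f : ℕ → Bool) :
    ((List.range P.length).filter
      (fun j => decide (0 < j) && decide (j + 1 < P.length) && f (P.getD j 0))).length
      = cntAb ((P.map f).tail) := by
  cases P with
  | nil => rfl
  | cons x M =>
    rw [List.length_cons, List.range_succ_eq_map, List.filter_cons]
    have h0 : (decide (0 < 0) && decide (0 + 1 < M.length + 1) && f ((x :: M).getD 0 0))
        = false := by simp
    rw [h0]
    simp only [if_neg (by simp : ¬ (false = true))]
    rw [List.filter_map]
    have h1 : ((fun j => decide (0 < j) && decide (j + 1 < (x :: M).length) &&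
        f ((x :: M).getD j 0)) ∘ Nat.succ)
        = (fun j => decide (j + 1 < M.length) && f (M.getD j 0)) := by
      funext j
      show (decide (0 < j + 1) && decide (j + 1 + 1 < M.length + 1) &&
        f ((x :: M).getD (j + 1) 0)) = _
      rw [List.getD_cons_succ]
      have : decide (0 < j + 1) = true := by simp
      rw [this]
      have : decide (j + 1 + 1 < M.length + 1) = decide (j + 1 < M.length) :=
        decide_eq_decide.mpr (by omega)
      rw [this]
      simp
    have h2 : ((fun j => decide (0 < j) && decide (j + 1 < M.length + 1) &&
        f ((x :: M).getD j 0)) ∘ Nat.succ)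
        = (fun j => decide (j + 1 < M.length) && f (M.getD j 0)) := h1
    rw [h2, List.length_map, A_pure]
    rfl

lemma cntT_eq : ∀ (s : List Bool),
    s.count true = cntAb s + (if s.getLast? = some true then 1 else 0) := by
  intro s
  induction s with
  | nil => rfl
  | cons x M ih =>
    rw [List.count_cons, ih, cntAb]
    cases M with
    | nil =>
      simp only [List.length_nil, List.getLast?_nil, List.count_nil, cntAb]
      by_cases hx : x = true
      · subst hx; simp
      · have : x = false := by simpa using hx
        subst this; simp
    | cons y M' =>
      have hlast : (x :: y :: M').getLast? = (y :: M').getLast? := by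
        rw [List.getLast?_cons_cons]
      rw [hlast]
      have hlen : 0 < (y :: M').length := by simp
      by_cases hx : x = true
      · subst hx
        rw [if_pos (show (true == true) = true from rfl),
          if_pos (show 0 < (y :: M').length ∧ true = true from ⟨hlen, rfl⟩)]
        omega
      · have hx' : x = false := by simpa using hx
        subst hx'
        rw [if_neg (show ¬ ((false == true) = true) by simp),
          if_neg (show ¬ (0 < (y :: M').length ∧ false = true) by simp)]
        omega

lemma opt_head (l : List ℕ) (f : ℕ → Bool) :
    (∃ p ∈ l.head?, f p = true) ↔ (l.map f).head? = some true := by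
  cases l <;> simp

lemma opt_last (l : List ℕ) (f : ℕ → Bool) :
    (∃ p ∈ l.getLast?, f p = true) ↔ (l.map f).getLast? = some true := by
  rw [List.getLast?_map]
  cases h : l.getLast? <;> simp

end SP
namespace SP

lemma dyck_head_last (w : List Bool) (hw : IsDyckWord w) :
    w = [] ∨ (w.head? = some true ∧ w.getLast? = some false) := by
  rcases eq_or_ne w [] with h | h
  · left; exact h
  right
  constructor
  · cases hww : w with
    | nil => exact absurd hww h
    | cons y v =>
      cases y with
      | true => rfl
      | false =>
        exfalso
        have h1 := hw.2 1
        rw [hww] at h1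
        have e : hgt (false :: v) 1 = -1 := by
          simp [hgt]
        rw [e] at h1
        omega
  · rcases List.eq_nil_or_concat w with hn | ⟨V, b, hc⟩
    · exact absurd hn h
    · subst hc
      rw [List.concat_eq_append] at *
      cases b with
      | false => exact List.getLast?_concat
      | true =>
        exfalso
        have hcount := hw.1
        have hpre := hw.2 V.length
        rw [List.count_append, List.count_append] at hcount
        simp only [List.count_singleton] at hcount
        have e : hgt (V ++ [true]) V.length = (V.count true : ℤ) - V.count false := by
          unfold hgt
          rw [List.take_left]
        rw [e] at hpre
        simp at hcount
        omega

lemma exists_decomp : ∀ (n : ℕ) (w : List Bool), w.length ≤ n →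
    (w = [] ∨ (w.head? = some true ∧ w.getLast? = some false)) →
    ∃ L, PosL L ∧ w = ofP L := by
  intro n
  induction n with
  | zero =>
    intro w hlen _
    have : w = [] := List.length_eq_zero_iff.mp (by omega)
    exact ⟨[], fun q hq => absurd hq List.not_mem_nil, by rw [this]; rfl⟩
  | succ n ih =>
    intro w hlen hcond
    rcases hcond with rfl | ⟨hh, hl⟩
    · exact ⟨[], fun q hq => absurd hq List.not_mem_nil, rfl⟩
    have hwne : w ≠ [] := by
      intro he; rw [he] at hh; cases hh
    set A := w.takeWhile (fun b => b) with hA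
    set W1 := w.dropWhile (fun b => b) with hW1
    have hwAW : A ++ W1 = w := List.takeWhile_append_dropWhile
    have hArep : A = List.replicate A.length true :=
      List.eq_replicate_iff.mpr ⟨rfl, fun b hb => List.mem_takeWhile_imp hb⟩
    have hApos : 0 < A.length := by
      cases hww : w with
      | nil => exact absurd hww hwne
      | cons y v =>
        have hy : y = true := by rw [hww] at hh; simpa using hh
        subst hy
        rw [hA, hww, List.takeWhile_cons_of_pos rfl]
        simp
    have hW1ne : W1 ≠ [] := by
      intro he
      have hwA : w = A := by rw [← hwAW, he, List.append_nil]
      have hmem : false ∈ w := List.mem_of_getLast? hl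
      rw [hwA, hArep] at hmem
      cases List.eq_of_mem_replicate hmem
    have hW1head : W1.head? = some false := by
      cases hW1c : W1 with
      | nil => exact absurd hW1c hW1ne
      | cons z r =>
        have hnot := List.head?_dropWhile_not (fun b => b) w
        rw [← hW1, hW1c] at hnot
        simp at hnot
        rw [hnot]
        rfl
    set B := W1.takeWhile (fun b => !b) with hB
    set W2 := W1.dropWhile (fun b => !b) with hW2
    have hW1BW : B ++ W2 = W1 := List.takeWhile_append_dropWhile
    have hBrep : B = List.replicate B.length false :=
      List.eq_replicate_iff.mpr ⟨rfl, fun b hb => by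
        simpa using List.mem_takeWhile_imp hb⟩
    have hBpos : 0 < B.length := by
      cases hW1c : W1 with
      | nil => exact absurd hW1c hW1ne
      | cons z r =>
        have hz : z = false := by rw [hW1c] at hW1head; simpa using hW1head
        subst hz
        rw [hB, hW1c, List.takeWhile_cons_of_pos rfl]
        simp
    have hwfull : w = (A ++ B) ++ W2 := by
      rw [List.append_assoc, hW1BW, hwAW]
    have hcond2 : W2 = [] ∨ (W2.head? = some true ∧ W2.getLast? = some false) := by
      rcases eq_or_ne W2 [] with he | hne
      · left; exact he
      right
      constructor
      · cases hW2c : W2 with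
        | nil => exact absurd hW2c hne
        | cons z r =>
          have hnot := List.head?_dropWhile_not (fun b => !b) W1
          rw [← hW2, hW2c] at hnot
          simp at hnot
          rw [hnot]
          rfl
      · cases hW2l : W2.getLast? with
        | none =>
          exact absurd (List.getLast?_eq_none_iff.mp hW2l) hne
        | some c =>
          have : w.getLast? = some c := by
            rw [hwfull, List.getLast?_append, hW2l]
            rfl
          rw [hl] at this
          rw [← this]
    have hlenW2 : W2.length ≤ n := by
      have := congrArg List.length hwfull
      rw [List.length_append, List.length_append] at this
      omega
    obtain ⟨L2, hP2, hW2eq⟩ := ih W2 hlenW2 hcond2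
    refine ⟨(A.length, B.length) :: L2, ?_, ?_⟩
    · intro q hq
      rcases List.mem_cons.mp hq with hq1 | hq2
      · rw [hq1]; exact ⟨hApos, hBpos⟩
      · exact hP2 q hq2
    · show w = blkL (A.length, B.length) ++ ofP L2
      rw [← hW2eq]
      unfold blkL
      rw [hwfull]
      congr 1
      rw [← hArep, ← hBrep]

end SP

namespace SP

lemma final_bool : ∀ (s : List Bool),
    (cntAb s.tail ≠ s.count true) ↔
      (s.head? = some true ∨ s.getLast? = some true) := by
  intro s
  cases s with
  | nil => simp [cntAb]
  | cons x M =>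
    rw [cntT_eq (x :: M)]
    cases M with
    | nil =>
      simp only [List.tail_cons]
      by_cases hx : x = true
      · subst hx; simp [cntAb]
      · have hx' : x = false := by simpa using hx
        subst hx'; simp [cntAb]
    | cons y M' =>
      have hlast : (x :: y :: M').getLast? = (y :: M').getLast? :=
        List.getLast?_cons_cons
      have hcA : cntAb (x :: y :: M')
          = (if 0 < (y :: M').length ∧ x = true then 1 else 0) + cntAb (y :: M') := rfl
      rw [hcA, hlast, List.tail_cons]
      by_cases hx : x = true
      · subst hx
        rw [if_pos ⟨by simp, rfl⟩]
        constructor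
        · intro _; left; rfl
        · intro _; omega
      · have hx' : x = false := by simpa using hx
        subst hx'
        rw [if_neg (by simp)]
        by_cases hlv : (y :: M').getLast? = some true
        · rw [if_pos hlv]
          constructor
          · intro _; right; exact hlv
          · intro _; omega
        · rw [if_neg hlv]
          constructor
          · intro hne; exfalso; omega
          · rintro (h | h)
            · cases h
            · exact absurd h hlv

end SP

/-- For every Dyck path `w`, the number of pairs of consecutive
valleys at the same height equals the number of symmetric peaks of `w` that are
neither the first nor the last peak; the two statistics differ exactly when `w`
starts or ends with a symmetric peak (i.e. its first or last peak is symmetric). -/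
theorem spPrime_eq_interior_symmetric_peaks (w : List Bool) (hw : IsDyckWord w) :
    spPrime w =
      ((List.range (peakList w).length).filter
        (fun j => decide (0 < j) && decide (j + 1 < (peakList w).length) &&
          isSymPeakB w ((peakList w).getD j 0))).length ∧
    (spPrime w ≠ spCount w ↔
      ((∃ p ∈ (peakList w).head?, isSymPeakB w p = true) ∨
       (∃ p ∈ (peakList w).getLast?, isSymPeakB w p = true))) := by
  obtain ⟨L, hPos, hwL⟩ :=
    SP.exists_decomp w.length w (le_refl _) (SP.dyck_head_last w hw)
  subst hwL
  have hsym' : (peakList (SP.ofP L)).map (isSymPeakB (SP.ofP L)) = L.map SP.symb :=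
    SP.L_sym L hPos
  have h1 : spPrime (SP.ofP L) = SP.cntAb ((L.map SP.symb).tail) := by
    unfold spPrime
    rw [SP.L_vh L hPos, SP.eqAdj_vh L]
  have h2 : ((List.range (peakList (SP.ofP L)).length).filter
        (fun j => decide (0 < j) && decide (j + 1 < (peakList (SP.ofP L)).length) &&
          isSymPeakB (SP.ofP L) ((peakList (SP.ofP L)).getD j 0))).length
      = SP.cntAb ((L.map SP.symb).tail) := by
    rw [SP.T_pure (peakList (SP.ofP L)) (isSymPeakB (SP.ofP L)), hsym']
  have hsp : spCount (SP.ofP L) = (L.map SP.symb).count true := by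
    unfold spCount
    have e1 : (List.range (SP.ofP L).length).filter (isSymPeakB (SP.ofP L))
        = (peakList (SP.ofP L)).filter (isSymPeakB (SP.ofP L)) := by
      unfold peakList
      rw [List.filter_filter]
      apply List.filter_congr
      intro i _
      unfold isSymPeakB
      cases isPeakB (SP.ofP L) i <;> simp
    rw [e1, ← List.countP_eq_length_filter, ← hsym', List.count, List.countP_map]
    apply List.countP_congr
    intro a _
    simp [Function.comp]
  refine ⟨h1.trans h2.symm, ?_⟩
  rw [h1, hsp]
  rw [show ((∃ p ∈ (peakList (SP.ofP L)).head?, isSymPeakB (SP.ofP L) p = true) ↔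
      ((peakList (SP.ofP L)).map (isSymPeakB (SP.ofP L))).head? = some true) from
      SP.opt_head _ _,
    show ((∃ p ∈ (peakList (SP.ofP L)).getLast?, isSymPeakB (SP.ofP L) p = true) ↔
      ((peakList (SP.ofP L)).map (isSymPeakB (SP.ofP L))).getLast? = some true) from
      SP.opt_last _ _, hsym']
  exact SP.final_bool (L.map SP.symb)
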